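/- If u ∈ C⁴[0,1] satisfies u(0)=u'(0)=u''(1)=u'''(1)=0 and u⁗ ≥ 0 on [0,1], then u(t) ≥ -(t³/6)·u'''(t) for all t ∈ [0,1]. -/

import Mathlib

open Set intervalIntegral Real

lemma mono_aux' {a b : ℝ} {g g' : ℝ → ℝ}
    (h : ∀ s ∈ Set.Icc a b, HasDerivWithinAt g (g' s) (Set.Icc a b) s)
    (h0 : ∀ s ∈ Set.Icc a b, 0 ≤ g' s) : MonotoneOn g (Set.Icc a b) :=
  monotoneOn_of_hasDerivWithinAt_nonneg (convex_Icc a b)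
    (fun s hs => (h s hs).continuousWithinAt)
    (fun x hx => ((h x (interior_subset hx)).mono interior_subset))
    (fun x hx => h0 x (interior_subset hx))

theorem stmt3 (u u1 u2 u3 u4 : ℝ → ℝ)
    (hu1 : ∀ t ∈ Set.Icc (0:ℝ) 1, HasDerivWithinAt u (u1 t) (Set.Icc 0 1) t)
    (hu2 : ∀ t ∈ Set.Icc (0:ℝ) 1, HasDerivWithinAt u1 (u2 t) (Set.Icc 0 1) t)
    (hu3 : ∀ t ∈ Set.Icc (0:ℝ) 1, HasDerivWithinAt u2 (u3 t) (Set.Icc 0 1) t)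
    (hu4 : ∀ t ∈ Set.Icc (0:ℝ) 1, HasDerivWithinAt u3 (u4 t) (Set.Icc 0 1) t)
    (hc4 : ContinuousOn u4 (Set.Icc 0 1))
    (hb0 : u 0 = 0) (hb1 : u1 0 = 0) (hb2 : u2 1 = 0) (hb3 : u3 1 = 0)
    (hpos : ∀ t ∈ Set.Icc (0:ℝ) 1, 0 ≤ u4 t) :
    ∀ t ∈ Set.Icc (0:ℝ) 1, u t ≥ -(t ^ 3 / 6) * u3 t := by
  have mono3 : MonotoneOn u3 (Set.Icc 0 1) := mono_aux' hu4 hpos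
  have h3le : ∀ s ∈ Set.Icc (0:ℝ) 1, u3 s ≤ 0 := by
    intro s hs
    have := mono3 hs (right_mem_Icc.2 zero_le_one) hs.2
    rwa [hb3] at this
  have h2ge : ∀ s ∈ Set.Icc (0:ℝ) 1, 0 ≤ u2 s := by
    have m2 : MonotoneOn (fun x => -u2 x) (Set.Icc 0 1) :=
      mono_aux' (g' := fun x => -u3 x) (fun s hs => (hu3 s hs).neg)
        (fun s hs => neg_nonneg.2 (h3le s hs))
    intro s hs
    have := m2 hs (right_mem_Icc.2 zero_le_one) hs.2
    simp only [hb2] at this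
    linarith
  intro t ht
  have hsub : Set.Icc (0:ℝ) t ⊆ Set.Icc 0 1 := Set.Icc_subset_Icc le_rfl ht.2
  have hmem : ∀ s ∈ Set.Icc (0:ℝ) t, s ∈ Set.Icc (0:ℝ) 1 := fun s hs => hsub hs
  have h0mem : (0:ℝ) ∈ Set.Icc (0:ℝ) t := ⟨le_rfl, ht.1⟩
  have htmem : t ∈ Set.Icc (0:ℝ) t := ⟨ht.1, le_rfl⟩
  -- Step 1: u2 s + (t - s) * u3 t ≥ 0 on [0, t]
  have hφ : ∀ s ∈ Set.Icc (0:ℝ) t, 0 ≤ u2 s + (t - s) * u3 t := by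
    have mF : MonotoneOn (fun s => -u2 s - (t - s) * u3 t) (Set.Icc 0 t) := by
      apply mono_aux' (g' := fun s => u3 t - u3 s)
      · intro s hs
        have d1 : HasDerivWithinAt (fun s => -u2 s) (-u3 s) (Set.Icc 0 t) s :=
          ((hu3 s (hmem s hs)).mono hsub).neg
        have d2 : HasDerivWithinAt (fun s => (t - s) * u3 t) ((-1) * u3 t) (Set.Icc 0 t) s :=
          (((hasDerivWithinAt_id s (Set.Icc 0 t)).const_sub t)).mul_const (u3 t)
        exact (d1.sub d2).congr_deriv (by beta_reduce; ring)
      · intro s hs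
        have := mono3 (hmem s hs) ht hs.2
        linarith
    intro s hs
    have := mF hs htmem hs.2
    have h2t := h2ge t ht
    simp only [sub_self, zero_mul, sub_zero] at this
    linarith
  -- Step 2: u1 s - (t-s)^2/2 * u3 t ≥ -(t^2/2) * u3 t on [0, t]
  have hψ : ∀ s ∈ Set.Icc (0:ℝ) t, -(t^2/2) * u3 t ≤ u1 s - (t - s)^2/2 * u3 t := by
    have mG : MonotoneOn (fun s => u1 s - (t - s)^2/2 * u3 t) (Set.Icc 0 t) := by
      apply mono_aux' (g' := fun s => u2 s + (t - s) * u3 t)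
      · intro s hs
        have d1 : HasDerivWithinAt u1 (u2 s) (Set.Icc 0 t) s :=
          (hu2 s (hmem s hs)).mono hsub
        have d2 : HasDerivWithinAt (fun s => (t - s)^2/2 * u3 t)
            ((2 * (t - s)^1 * (-1)) / 2 * u3 t) (Set.Icc 0 t) s :=
          ((((hasDerivWithinAt_id s (Set.Icc 0 t)).const_sub t)).pow 2).div_const 2
            |>.mul_const (u3 t)
        exact (d1.sub d2).congr_deriv (by beta_reduce; ring)
      · exact hφ
    intro s hs
    have := mG h0mem hs hs.1
    simp only [sub_zero, hb1] at this
    linarith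
  -- Step 3: monotonicity of H s = u s + u3 t * ((t-s)^3/6 + t^2 * s / 2)
  have mH : MonotoneOn (fun s => u s + u3 t * ((t - s)^3/6 + t^2 * s / 2)) (Set.Icc 0 t) := by
    apply mono_aux' (g' := fun s => u1 s + u3 t * ((3 * (t - s)^2 * (-1))/6 + t^2 / 2))
    · intro s hs
      have d1 : HasDerivWithinAt u (u1 s) (Set.Icc 0 t) s :=
        (hu1 s (hmem s hs)).mono hsub
      have d2 : HasDerivWithinAt (fun s => (t - s)^3/6 + t^2 * s / 2)
          ((3 * (t - s)^2 * (-1))/6 + t^2 * 1 / 2) (Set.Icc 0 t) s := by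
        have e1 : HasDerivWithinAt (fun s : ℝ => (t - s)^3/6) ((3 * (t - s)^2 * (-1))/6)
            (Set.Icc 0 t) s :=
          ((((hasDerivWithinAt_id s (Set.Icc 0 t)).const_sub t)).pow 3).div_const 6
        have e2 : HasDerivWithinAt (fun s : ℝ => t^2 * s / 2) (t^2 * 1 / 2) (Set.Icc 0 t) s :=
          (((hasDerivWithinAt_id s (Set.Icc 0 t)).const_mul (t^2))).div_const 2
        exact e1.add e2
      exact (d1.add (d2.const_mul (u3 t))).congr_deriv (by beta_reduce; ring)
    · intro s hs
      have := hψ s hs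
      nlinarith
  have key := mH h0mem htmem ht.1
  simp only [hb0, sub_self, mul_zero, zero_add] at key
  have h3t : u3 t ≤ 0 := h3le t ht
  nlinarith [pow_nonneg ht.1 3, key]
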